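/- arXiv:1507.03189 — 3 statements merged into one kernel-verified Lean document; each statement's English description precedes it below -/
import Mathlib

section
/- For c = 1 and α = (π/2)² − 2, the dispersion function D(ζ) = −ζ² + 4 sin²(ζ/2) + α has exactly two real roots, namely ζ = π/2 and ζ = −π/2. -/
open Real

lemma f_strictMono : StrictMonoOn (fun x : ℝ => x ^ 2 + 2 * Real.cos x) (Set.Ici 0) := by
  apply strictMonoOn_of_deriv_pos (convex_Ici 0)
  · exact ((continuous_pow 2).add (continuous_const.mul Real.continuous_cos)).continuousOn
  · intro x hx
    rw [interior_Ici] at hx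
    have hx : (0:ℝ) < x := hx
    have hd : deriv (fun x : ℝ => x ^ 2 + 2 * Real.cos x) x = 2 * x + 2 * (-Real.sin x) := by
      simp [deriv_add, deriv_pow, mul_comm]
    rw [hd]
    have := Real.sin_lt hx
    linarith

theorem stmt_0 (α : ℝ) (hα : α = (Real.pi / 2) ^ 2 - 2)
    (D : ℝ → ℝ) (hD : ∀ ζ, D ζ = -ζ ^ 2 + 4 * Real.sin (ζ / 2) ^ 2 + α) :
    ∀ ζ : ℝ, D ζ = 0 ↔ ζ = Real.pi / 2 ∨ ζ = -(Real.pi / 2) := by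
  intro ζ
  have hsin : ∀ x : ℝ, 4 * Real.sin (x / 2) ^ 2 = 2 - 2 * Real.cos x := by
    intro x
    have h1 : Real.sin (x / 2) ^ 2 = 1 - Real.cos (x / 2) ^ 2 := by nlinarith [Real.sin_sq_add_cos_sq (x/2)]
    have h2 : Real.cos (x / 2) ^ 2 = 1 / 2 + Real.cos (2 * (x / 2)) / 2 := Real.cos_sq _
    rw [h1, h2]
    ring_nf
  have key : D ζ = 0 ↔ ζ ^ 2 + 2 * Real.cos ζ = (Real.pi / 2) ^ 2 := by
    rw [hD, hsin, hα]; constructor <;> intro h <;> linarith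
  have hval : (Real.pi / 2) ^ 2 + 2 * Real.cos (Real.pi / 2) = (Real.pi / 2) ^ 2 := by
    rw [Real.cos_pi_div_two]; ring
  constructor
  · intro h
    rw [key] at h
    have habs : |ζ| ^ 2 + 2 * Real.cos |ζ| = (Real.pi / 2) ^ 2 := by
      rw [sq_abs, Real.cos_abs]; exact h
    have hmem : |ζ| ∈ Set.Ici (0:ℝ) := abs_nonneg ζ
    have hpimem : Real.pi / 2 ∈ Set.Ici (0:ℝ) := Set.mem_Ici.mpr (by positivity)
    have : |ζ| = Real.pi / 2 := by
      apply f_strictMono.injOn hmem hpimem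
      simp only
      rw [habs, hval]
    rcases abs_eq (by positivity : (0:ℝ) ≤ Real.pi / 2) |>.mp this with h' | h'
    · exact Or.inl h'
    · exact Or.inr h'
  · rintro (rfl | rfl)
    · rw [key]; exact hval
    · rw [key]
      rw [Real.cos_neg]
      rw [Real.cos_pi_div_two]; ring
end

section
/- Let u₀ be an odd function in H²_loc(ℝ) such that for l = 0,1,2, x ↦ (1+x²)·(d^l/dx^l)(u₀(x) − sgn(x)cos(k₀x)) lies in L²(ℝ∖[−1,1]), with k₀ = π/2. Then ∫_ℝ sin(k₀x)·(c²u₀'' − Δ_D u₀ + α u₀) dx = −2c²k₀ + 2, where Δ_D u(x) = u(x+1) − 2u(x) + u(x−1). In particular this integral is negative when c² > 2/π. -/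
open MeasureTheory Set Filter

lemma aux_tendsto_zero (f : ℝ → ℝ) (hd : Differentiable ℝ f) (hdc : Continuous (deriv f))
    (h1 : MemLp f 2 (volume.restrict (Set.Ici (2:ℝ))))
    (h2 : MemLp (deriv f) 2 (volume.restrict (Set.Ici (2:ℝ)))) :
    Tendsto f atTop (nhds 0) := by
  set g : ℝ → ℝ := fun x => f x ^ 2 with hg
  have hgd : ∀ x, HasDerivAt g (2 * f x * deriv f x) x := by
    intro x
    have := ((hd x).hasDerivAt).fun_pow 2
    simpa [mul_comm, mul_assoc, mul_left_comm] using this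
  have hfc : Continuous f := hd.continuous
  have hφc : Continuous (fun x => 2 * f x * deriv f x) :=
    (continuous_const.mul hfc).mul hdc
  -- integrability of φ on Ici 2
  have hsum : Integrable (fun x => f x ^ 2 + deriv f x ^ 2) (volume.restrict (Set.Ici (2:ℝ))) :=
    h1.integrable_sq.add h2.integrable_sq
  have hφint : Integrable (fun x => 2 * f x * deriv f x) (volume.restrict (Set.Ici (2:ℝ))) := by
    refine hsum.mono' hφc.aestronglyMeasurable ?_
    refine Filter.Eventually.of_forall (fun x => ?_)
    simp only [norm_mul, Real.norm_eq_abs, abs_two]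
    nlinarith [sq_nonneg (|f x| - |deriv f x|), sq_abs (f x), sq_abs (deriv f x), abs_nonneg (f x), abs_nonneg (deriv f x)]
  have hφIoi : IntegrableOn (fun x => 2 * f x * deriv f x) (Set.Ioi (2:ℝ)) volume :=
    hφint.mono_measure (Measure.restrict_mono Set.Ioi_subset_Ici_self le_rfl)
  have hFTC : ∀ x : ℝ, ∫ t in (2:ℝ)..x, 2 * f t * deriv f t = g x - g 2 := by
    intro x
    exact intervalIntegral.integral_eq_sub_of_hasDerivAt (fun t _ => hgd t)
      (hφc.intervalIntegrable _ _)
  have hlim : Tendsto (fun x : ℝ => ∫ t in (2:ℝ)..x, 2 * f t * deriv f t) atTop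
      (nhds (∫ t in Set.Ioi (2:ℝ), 2 * f t * deriv f t)) :=
    MeasureTheory.intervalIntegral_tendsto_integral_Ioi 2 hφIoi tendsto_id
  have hglim : Tendsto g atTop (nhds (g 2 + ∫ t in Set.Ioi (2:ℝ), 2 * f t * deriv f t)) := by
    have := hlim.const_add (g 2)
    refine this.congr (fun x => ?_)
    rw [hFTC x]; ring
  set L := g 2 + ∫ t in Set.Ioi (2:ℝ), 2 * f t * deriv f t with hL
  have hL0 : 0 ≤ L := le_of_tendsto_of_tendsto' tendsto_const_nhds hglim
    (fun x => sq_nonneg (f x))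
  have hLz : L = 0 := by
    by_contra hne
    have hLpos : 0 < L := lt_of_le_of_ne hL0 (Ne.symm hne)
    have hev : ∀ᶠ x in atTop, L / 2 ≤ g x := by
      have : ∀ᶠ x in atTop, g x ∈ Set.Ioi (L / 2) :=
        hglim.eventually (eventually_gt_nhds (by linarith))
      exact this.mono (fun x hx => le_of_lt hx)
    obtain ⟨M, hM⟩ := Filter.eventually_atTop.1 hev
    set M' := max M 2 with hM'
    have hgint : Integrable g (volume.restrict (Set.Ici M')) :=
      h1.integrable_sq.mono_measure
        (Measure.restrict_mono (Set.Ici_subset_Ici.2 (le_max_right M 2)) le_rfl)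
    have hcint : Integrable (fun _ : ℝ => L / 2) (volume.restrict (Set.Ici M')) := by
      refine hgint.mono' aestronglyMeasurable_const ?_
      rw [ae_restrict_iff' measurableSet_Ici]
      refine Filter.Eventually.of_forall (fun x hx => ?_)
      have : L / 2 ≤ g x := hM x (le_trans (le_max_left M 2) hx)
      rw [Real.norm_eq_abs, abs_of_pos (by linarith)]
      exact this
    rw [integrable_const_iff] at hcint
    rcases hcint with h | h
    · exact absurd h (by positivity)
    · have h := h.measure_univ_lt_top
      simp [Real.volume_Ici] at h
  rw [hLz] at hglim
  have habs : Tendsto (fun x => |f x|) atTop (nhds 0) := by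
    have hsq : Tendsto (fun x => Real.sqrt (g x)) atTop (nhds (Real.sqrt 0)) :=
      (Real.continuous_sqrt.tendsto 0).comp hglim
    rw [Real.sqrt_zero] at hsq
    refine hsq.congr (fun x => ?_)
    simp [hg, Real.sqrt_sq_eq_abs]
  exact (tendsto_zero_iff_abs_tendsto_zero f).2 habs

lemma aux_iterEq (k₀ : ℝ) (u₀ : ℝ → ℝ) (l : ℕ) {x : ℝ} (hx : (1:ℝ) < x) :
    iteratedDeriv l (fun y => u₀ y - Real.sign y * Real.cos (k₀ * y)) x
      = iteratedDeriv l (fun y => u₀ y - Real.cos (k₀ * y)) x := by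
  refine Filter.EventuallyEq.iteratedDeriv_eq l ?_
  have hmem : Set.Ioi (1:ℝ) ∈ nhds x := Ioi_mem_nhds hx
  refine Filter.eventuallyEq_of_mem hmem (fun y hy => ?_)
  have : Real.sign y = 1 := Real.sign_of_pos (lt_trans one_pos hy)
  simp [this]

lemma aux_memL2 (k₀ : ℝ) (u₀ : ℝ → ℝ) (l : ℕ)
    (hcont : Continuous (iteratedDeriv l (fun y => u₀ y - Real.cos (k₀ * y))))
    (h : MemLp (fun x => (1 + x ^ 2) *
        iteratedDeriv l (fun y => u₀ y - Real.sign y * Real.cos (k₀ * y)) x) 2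
      (volume.restrict {x : ℝ | 1 ≤ |x|})) :
    MemLp (iteratedDeriv l (fun y => u₀ y - Real.cos (k₀ * y))) 2
      (volume.restrict (Set.Ici (2:ℝ))) := by
  have hres := h.restrict (Set.Ici (2:ℝ))
  rw [Measure.restrict_restrict measurableSet_Ici] at hres
  have hsub : Set.Ici (2:ℝ) ∩ {x : ℝ | 1 ≤ |x|} = Set.Ici (2:ℝ) := by
    refine Set.inter_eq_left.2 (fun x hx => ?_)
    have : (2:ℝ) ≤ x := hx
    simp only [Set.mem_setOf_eq, abs_of_pos (by linarith : (0:ℝ) < x)]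
    linarith
  rw [hsub] at hres
  refine hres.mono hcont.aestronglyMeasurable ?_
  rw [ae_restrict_iff' measurableSet_Ici]
  refine Filter.Eventually.of_forall (fun x hx => ?_)
  have hx2 : (2:ℝ) ≤ x := hx
  rw [aux_iterEq k₀ u₀ l (by linarith : (1:ℝ) < x)]
  rw [Real.norm_eq_abs, Real.norm_eq_abs, abs_mul]
  have h1 : (1:ℝ) ≤ |1 + x ^ 2| := by
    rw [abs_of_pos (by positivity)]; nlinarith
  nlinarith [abs_nonneg (iteratedDeriv l (fun y => u₀ y - Real.cos (k₀ * y)) x)]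

lemma aux_key (c k₀ α : ℝ) (hk₀ : k₀ = Real.pi / 2) (hα : α = c ^ 2 * k₀ ^ 2 - 2)
    (u₀ : ℝ → ℝ) (hu₀ : ContDiff ℝ 2 u₀) (hodd : ∀ x, u₀ (-x) = -u₀ x) (z : ℝ) :
    ∫ x in (-z)..z, Real.sin (k₀ * x) *
        (c ^ 2 * deriv (deriv u₀) x - (u₀ (x + 1) - 2 * u₀ x + u₀ (x - 1)) + α * u₀ x)
      = 2 * c ^ 2 * (Real.sin (k₀ * z) * deriv u₀ z - k₀ * Real.cos (k₀ * z) * u₀ z)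
        + 2 * ∫ x in (z - 1)..(z + 1), Real.cos (k₀ * x) * u₀ x := by
  -- basic regularity
  have hreg : Differentiable ℝ u₀ ∧ Differentiable ℝ (deriv u₀) ∧
      Continuous (deriv (deriv u₀)) := by
    have h2 : ContDiff ℝ (1 + 1) u₀ := by norm_num; exact hu₀
    rw [contDiff_succ_iff_deriv] at h2
    have h1 := h2.2.2
    rw [show (1 : WithTop ℕ∞) = 0 + 1 by norm_num, contDiff_succ_iff_deriv] at h1
    exact ⟨h2.1, h1.1, h1.2.2.continuous⟩
  obtain ⟨hd, hd1, hc2⟩ := hreg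
  have hcu : Continuous u₀ := hd.continuous
  have hcu' : Continuous (deriv u₀) := hd1.continuous
  have hcsin : Continuous (fun x : ℝ => Real.sin (k₀ * x)) :=
    Real.continuous_sin.comp (continuous_const.mul continuous_id)
  have hccos : Continuous (fun x : ℝ => Real.cos (k₀ * x)) :=
    Real.continuous_cos.comp (continuous_const.mul continuous_id)
  set G : ℝ → ℝ := fun z => Real.sin (k₀ * z) * deriv u₀ z - k₀ * Real.cos (k₀ * z) * u₀ z
    with hGdef
  set h : ℝ → ℝ := fun y => Real.cos (k₀ * y) * u₀ y with hhdef
  have hch : Continuous h := hccos.mul hcu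
  -- derivative of G
  have hG : ∀ x : ℝ, HasDerivAt G
      (Real.sin (k₀ * x) * deriv (deriv u₀) x + k₀ ^ 2 * Real.sin (k₀ * x) * u₀ x) x := by
    intro x
    have hk : HasDerivAt (fun y : ℝ => k₀ * y) k₀ x := by
      simpa using (hasDerivAt_id x).const_mul k₀
    have hs : HasDerivAt (fun y : ℝ => Real.sin (k₀ * y)) (Real.cos (k₀ * x) * k₀) x := hk.sin
    have hc : HasDerivAt (fun y : ℝ => Real.cos (k₀ * y)) (-Real.sin (k₀ * x) * k₀) x := hk.cos
    have h1 : HasDerivAt (fun y => Real.sin (k₀ * y) * deriv u₀ y)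
        (Real.cos (k₀ * x) * k₀ * deriv u₀ x + Real.sin (k₀ * x) * deriv (deriv u₀) x) x :=
      hs.mul (hd1 x).hasDerivAt
    have h2 : HasDerivAt (fun y => Real.cos (k₀ * y) * u₀ y)
        (-Real.sin (k₀ * x) * k₀ * u₀ x + Real.cos (k₀ * x) * deriv u₀ x) x :=
      hc.mul (hd x).hasDerivAt
    have h3 := h1.fun_sub (h2.const_mul k₀)
    have h4 : HasDerivAt G
        (Real.cos (k₀ * x) * k₀ * deriv u₀ x + Real.sin (k₀ * x) * deriv (deriv u₀) x -
          k₀ * (-Real.sin (k₀ * x) * k₀ * u₀ x + Real.cos (k₀ * x) * deriv u₀ x)) x := by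
      rw [hGdef]; simp only [mul_assoc]; simpa only [mul_assoc] using h3
    convert h4 using 1
    ring
  -- FTC for the G part
  have hDcont : Continuous (fun x =>
      Real.sin (k₀ * x) * deriv (deriv u₀) x + k₀ ^ 2 * Real.sin (k₀ * x) * u₀ x) :=
    (hcsin.mul hc2).add ((continuous_const.mul hcsin).mul hcu)
  have hFTC : ∫ x in (-z)..z,
      (Real.sin (k₀ * x) * deriv (deriv u₀) x + k₀ ^ 2 * Real.sin (k₀ * x) * u₀ x)
      = G z - G (-z) :=
    intervalIntegral.integral_eq_sub_of_hasDerivAt (fun t _ => hG t)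
      (hDcont.intervalIntegrable _ _)
  -- oddness facts
  have hderiv_even : ∀ x : ℝ, deriv u₀ (-x) = deriv u₀ x := by
    intro x
    have h1 : HasDerivAt (fun y => u₀ (-y)) (deriv u₀ (-x) * (-1)) x :=
      ((hd (-x)).hasDerivAt).comp x (hasDerivAt_neg x)
    have h2 : HasDerivAt (fun y => u₀ (-y)) (-deriv u₀ x) x := by
      have : (fun y : ℝ => u₀ (-y)) = fun y => -u₀ y := funext hodd
      rw [this]
      exact (hd x).hasDerivAt.neg
    have := h1.unique h2
    linarith
  have hGodd : G (-z) = -G z := by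
    simp only [hGdef]
    rw [mul_neg, Real.sin_neg, Real.cos_neg, hderiv_even, hodd]
    ring
  -- shift identities
  have hshift1 : (∫ x in (-z)..z, Real.sin (k₀ * x) * u₀ (x + 1))
      = ∫ y in (-z + 1)..(z + 1), -h y := by
    have heq : ∀ x : ℝ, Real.sin (k₀ * x) * u₀ (x + 1)
        = (fun y => -h y) (x + 1) := by
      intro x
      simp only [hhdef]
      have : Real.cos (k₀ * (x + 1)) = -Real.sin (k₀ * x) := by
        rw [hk₀]; rw [show Real.pi / 2 * (x + 1) = Real.pi / 2 * x + Real.pi / 2 by ring]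
        exact Real.cos_add_pi_div_two _
      rw [this]; ring
    rw [show (fun x => Real.sin (k₀ * x) * u₀ (x + 1)) = fun x => (fun y => -h y) (x + 1)
      from funext heq]
    exact intervalIntegral.integral_comp_add_right (a := -z) (b := z) (fun y => -h y) 1
  have hshift2 : (∫ x in (-z)..z, Real.sin (k₀ * x) * u₀ (x - 1))
      = ∫ y in (-z - 1)..(z - 1), h y := by
    have heq : ∀ x : ℝ, Real.sin (k₀ * x) * u₀ (x - 1) = h (x - 1) := by
      intro x
      simp only [hhdef]
      have : Real.cos (k₀ * (x - 1)) = Real.sin (k₀ * x) := by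
        rw [hk₀]; rw [show Real.pi / 2 * (x - 1) = Real.pi / 2 * x - Real.pi / 2 by ring]
        exact Real.cos_sub_pi_div_two _
      rw [this]
    rw [show (fun x => Real.sin (k₀ * x) * u₀ (x - 1)) = fun x => h (x - 1) from funext heq]
    exact intervalIntegral.integral_comp_sub_right (a := -z) (b := z) h 1
  -- oddness of h and interval algebra
  have hhodd : (∫ y in (-z - 1)..(-z + 1), h y) = -∫ y in (z - 1)..(z + 1), h y := by
    have h1 : (∫ x in (z - 1)..(z + 1), h (-x)) = ∫ y in (-(z+1))..(-(z-1)), h y :=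
      intervalIntegral.integral_comp_neg (f := h)
    have h2 : (∫ x in (z - 1)..(z + 1), h (-x)) = -∫ x in (z - 1)..(z + 1), h x := by
      have : ∀ x : ℝ, h (-x) = -h x := by
        intro x; simp [hhdef, mul_neg, Real.cos_neg, hodd]
      rw [show (fun x => h (-x)) = fun x => -h x from funext this]
      exact intervalIntegral.integral_neg
    rw [h2] at h1
    rw [show -z - 1 = -(z+1) by ring, show -z + 1 = -(z-1) by ring, ← h1]
  have hadj1 : (∫ y in (-z - 1)..(z - 1), h y) + (∫ y in (z - 1)..(z + 1), h y)
      = ∫ y in (-z - 1)..(z + 1), h y :=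
    intervalIntegral.integral_add_adjacent_intervals (hch.intervalIntegrable _ _)
      (hch.intervalIntegrable _ _)
  have hadj2 : (∫ y in (-z - 1)..(-z + 1), h y) + (∫ y in (-z + 1)..(z + 1), h y)
      = ∫ y in (-z - 1)..(z + 1), h y :=
    intervalIntegral.integral_add_adjacent_intervals (hch.intervalIntegrable _ _)
      (hch.intervalIntegrable _ _)
  -- decompose the integrand
  have hint1 : IntervalIntegrable (fun x =>
      Real.sin (k₀ * x) * deriv (deriv u₀) x + k₀ ^ 2 * Real.sin (k₀ * x) * u₀ x)
      volume (-z) z := hDcont.intervalIntegrable _ _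
  have hcup : Continuous (fun x : ℝ => Real.sin (k₀ * x) * u₀ (x + 1)) :=
    hcsin.mul (hcu.comp (continuous_id.add continuous_const))
  have hcum : Continuous (fun x : ℝ => Real.sin (k₀ * x) * u₀ (x - 1)) :=
    hcsin.mul (hcu.comp (continuous_id.sub continuous_const))
  have hsplit : (∫ x in (-z)..z, Real.sin (k₀ * x) *
        (c ^ 2 * deriv (deriv u₀) x - (u₀ (x + 1) - 2 * u₀ x + u₀ (x - 1)) + α * u₀ x))
      = c ^ 2 * (∫ x in (-z)..z,
          (Real.sin (k₀ * x) * deriv (deriv u₀) x + k₀ ^ 2 * Real.sin (k₀ * x) * u₀ x))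
        - ((∫ x in (-z)..z, Real.sin (k₀ * x) * u₀ (x + 1))
          + (∫ x in (-z)..z, Real.sin (k₀ * x) * u₀ (x - 1))) := by
    rw [← intervalIntegral.integral_const_mul, ← intervalIntegral.integral_add
      (hcup.intervalIntegrable _ _) (hcum.intervalIntegrable _ _),
      ← intervalIntegral.integral_sub ((hint1.const_mul _))
      ((hcup.intervalIntegrable _ _).add (hcum.intervalIntegrable _ _))]
    refine intervalIntegral.integral_congr (fun x _ => ?_)
    rw [hα]; ring
  rw [hsplit, hFTC, hGodd, hshift1, hshift2, intervalIntegral.integral_neg]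
  have key2 : (∫ y in (-z + 1)..(z + 1), h y) - (∫ y in (-z - 1)..(z - 1), h y)
      = 2 * ∫ y in (z - 1)..(z + 1), h y := by linarith [hadj1, hadj2, hhodd]
  have hGz : Real.sin (k₀ * z) * deriv u₀ z - k₀ * Real.cos (k₀ * z) * u₀ z = G z := rfl
  rw [hGz]
  linear_combination key2

lemma aux_cossq (z : ℝ) :
    ∫ x in (z - 1)..(z + 1), Real.cos (Real.pi / 2 * x) ^ 2 = 1 := by
  have hπ : Real.pi ≠ 0 := Real.pi_ne_zero
  set A : ℝ → ℝ := fun x => x / 2 + Real.sin (Real.pi * x) / (2 * Real.pi) with hA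
  have hder : ∀ x : ℝ, HasDerivAt A (Real.cos (Real.pi / 2 * x) ^ 2) x := by
    intro x
    have h1 : HasDerivAt (fun y : ℝ => y / 2) (1 / 2 : ℝ) x := by
      simpa using (hasDerivAt_id x).div_const 2
    have hk : HasDerivAt (fun y : ℝ => Real.pi * y) Real.pi x := by
      simpa using (hasDerivAt_id x).const_mul Real.pi
    have h2 : HasDerivAt (fun y : ℝ => Real.sin (Real.pi * y) / (2 * Real.pi))
        (Real.cos (Real.pi * x) * Real.pi / (2 * Real.pi)) x := (hk.sin).div_const _
    have h3 : HasDerivAt A (1 / 2 + Real.cos (Real.pi * x) * Real.pi / (2 * Real.pi)) x :=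
      h1.fun_add h2
    convert h3 using 1
    rw [Real.cos_sq]
    rw [show 2 * (Real.pi / 2 * x) = Real.pi * x by ring]
    field_simp
  have hcont : Continuous (fun x : ℝ => Real.cos (Real.pi / 2 * x) ^ 2) := by
    exact (Real.continuous_cos.comp (continuous_const.mul continuous_id)).pow 2
  rw [intervalIntegral.integral_eq_sub_of_hasDerivAt (fun t _ => hder t)
    (hcont.intervalIntegrable _ _)]
  simp only [hA]
  rw [show Real.pi * (z + 1) = Real.pi * z + Real.pi by ring,
    show Real.pi * (z - 1) = Real.pi * z - Real.pi by ring,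
    Real.sin_add_pi, Real.sin_sub_pi]
  ring

theorem stmt_9 (c k₀ α : ℝ) (hk₀ : k₀ = Real.pi / 2) (hα : α = c ^ 2 * k₀ ^ 2 - 2)
    (u₀ : ℝ → ℝ) (hu₀ : ContDiff ℝ 2 u₀) (hodd : ∀ x, u₀ (-x) = -u₀ x)
    (hdecay : ∀ l : ℕ, l ≤ 2 →
      MemLp (fun x => (1 + x ^ 2) *
          iteratedDeriv l (fun y => u₀ y - Real.sign y * Real.cos (k₀ * y)) x) 2
        (volume.restrict {x : ℝ | 1 ≤ |x|})) :
    Filter.Tendsto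
      (fun z : ℝ => ∫ x in (-z)..z, Real.sin (k₀ * x) *
        (c ^ 2 * deriv (deriv u₀) x - (u₀ (x + 1) - 2 * u₀ x + u₀ (x - 1)) + α * u₀ x))
      Filter.atTop (nhds (-2 * c ^ 2 * k₀ + 2)) ∧
    (2 / Real.pi < c ^ 2 → -2 * c ^ 2 * k₀ + 2 < 0) := by
  constructor
  · -- regularity of u₀ and v
    have hregu : Differentiable ℝ u₀ ∧ Differentiable ℝ (deriv u₀) ∧
        Continuous (deriv (deriv u₀)) := by
      have h2 : ContDiff ℝ (1 + 1) u₀ := by norm_num; exact hu₀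
      rw [contDiff_succ_iff_deriv] at h2
      have h1 := h2.2.2
      rw [show (1 : WithTop ℕ∞) = 0 + 1 by norm_num, contDiff_succ_iff_deriv] at h1
      exact ⟨h2.1, h1.1, h1.2.2.continuous⟩
    obtain ⟨hd, hd1, hc2⟩ := hregu
    set v : ℝ → ℝ := fun y => u₀ y - Real.cos (k₀ * y) with hvdef
    have hcc : ContDiff ℝ 2 (fun x : ℝ => Real.cos (k₀ * x)) :=
      Real.contDiff_cos.comp (contDiff_const.mul contDiff_id)
    have hv : ContDiff ℝ 2 v := hu₀.sub hcc
    have hregv : Differentiable ℝ v ∧ Differentiable ℝ (deriv v) ∧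
        Continuous (deriv (deriv v)) := by
      have h2 : ContDiff ℝ (1 + 1) v := by norm_num; exact hv
      rw [contDiff_succ_iff_deriv] at h2
      have h1 := h2.2.2
      rw [show (1 : WithTop ℕ∞) = 0 + 1 by norm_num, contDiff_succ_iff_deriv] at h1
      exact ⟨h2.1, h1.1, h1.2.2.continuous⟩
    obtain ⟨hvd, hvd1, hvc2⟩ := hregv
    have hvc : Continuous v := hvd.continuous
    have hvc1 : Continuous (deriv v) := hvd1.continuous
    -- iterated derivative identifications
    have hiter2 : iteratedDeriv 2 (fun y => u₀ y - Real.cos (k₀ * y)) = deriv (deriv v) := by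
      rw [show (2 : ℕ) = 1 + 1 from rfl, iteratedDeriv_succ, iteratedDeriv_one]
    -- MemLp facts on Ici 2
    have hm0 : MemLp v 2 (volume.restrict (Set.Ici (2:ℝ))) := by
      have := aux_memL2 k₀ u₀ 0 (by rw [iteratedDeriv_zero]; exact hvc) (hdecay 0 (by norm_num))
      rwa [iteratedDeriv_zero] at this
    have hm1 : MemLp (deriv v) 2 (volume.restrict (Set.Ici (2:ℝ))) := by
      have := aux_memL2 k₀ u₀ 1 (by rw [iteratedDeriv_one]; exact hvc1) (hdecay 1 (by norm_num))
      rwa [iteratedDeriv_one] at this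
    have hm2 : MemLp (deriv (deriv v)) 2 (volume.restrict (Set.Ici (2:ℝ))) := by
      have := aux_memL2 k₀ u₀ 2 (by rw [hiter2]; exact hvc2) (hdecay 2 (by norm_num))
      rwa [hiter2] at this
    -- decay of v and v'
    have hv0 : Tendsto v atTop (nhds 0) := aux_tendsto_zero v hvd hvc1 hm0 hm1
    have hv1 : Tendsto (deriv v) atTop (nhds 0) := aux_tendsto_zero (deriv v) hvd1 hvc2 hm1 hm2
    -- the G limit
    have hderivv : ∀ z : ℝ, deriv v z = deriv u₀ z + Real.sin (k₀ * z) * k₀ := by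
      intro z
      have hk : HasDerivAt (fun y : ℝ => k₀ * y) k₀ z := by
        simpa using (hasDerivAt_id z).const_mul k₀
      have : HasDerivAt v (deriv u₀ z - -Real.sin (k₀ * z) * k₀) z :=
        (hd z).hasDerivAt.sub hk.cos
      rw [this.deriv]; ring
    have hGid : ∀ z : ℝ, Real.sin (k₀ * z) * deriv u₀ z - k₀ * Real.cos (k₀ * z) * u₀ z
        = -k₀ + Real.sin (k₀ * z) * deriv v z - k₀ * Real.cos (k₀ * z) * v z := by
      intro z
      have h1 : u₀ z = v z + Real.cos (k₀ * z) := by simp [hvdef]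
      rw [h1, hderivv z]
      linear_combination (-k₀) * Real.sin_sq_add_cos_sq (k₀ * z)
    have t1 : Tendsto (fun z => Real.sin (k₀ * z) * deriv v z) atTop (nhds 0) := by
      have hb : ∀ z : ℝ, ‖Real.sin (k₀ * z) * deriv v z‖ ≤ |deriv v z| := by
        intro z
        rw [Real.norm_eq_abs, abs_mul]
        exact mul_le_of_le_one_left (abs_nonneg _) (Real.abs_sin_le_one _)
      exact squeeze_zero_norm hb (by simpa using hv1.abs)
    have t2 : Tendsto (fun z => k₀ * Real.cos (k₀ * z) * v z) atTop (nhds 0) := by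
      have hb : ∀ z : ℝ, ‖k₀ * Real.cos (k₀ * z) * v z‖ ≤ |k₀| * |v z| := by
        intro z
        rw [Real.norm_eq_abs, abs_mul, abs_mul]
        exact mul_le_mul_of_nonneg_right
          (mul_le_of_le_one_right (abs_nonneg _) (Real.abs_cos_le_one _)) (abs_nonneg _)
      exact squeeze_zero_norm hb (by simpa using (hv0.abs).const_mul |k₀|)
    have hGlim : Tendsto (fun z => Real.sin (k₀ * z) * deriv u₀ z
        - k₀ * Real.cos (k₀ * z) * u₀ z) atTop (nhds (-k₀)) := by
      have h := (t1.const_add (-k₀)).sub t2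
      rw [add_zero, sub_zero] at h
      exact h.congr (fun z => (hGid z).symm)
    -- the K limit
    have hccos : Continuous (fun x : ℝ => Real.cos (k₀ * x)) :=
      Real.continuous_cos.comp (continuous_const.mul continuous_id)
    have hsplitK : ∀ z : ℝ, (∫ x in (z - 1)..(z + 1), Real.cos (k₀ * x) * u₀ x)
        = (∫ x in (z - 1)..(z + 1), Real.cos (k₀ * x) ^ 2)
          + ∫ x in (z - 1)..(z + 1), Real.cos (k₀ * x) * v x := by
      intro z
      rw [← intervalIntegral.integral_add
        ((show Continuous (fun x => Real.cos (k₀ * x) ^ 2) from hccos.pow 2).intervalIntegrable _ _)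
        ((show Continuous (fun x => Real.cos (k₀ * x) * v x) from hccos.mul hvc).intervalIntegrable _ _)]
      refine intervalIntegral.integral_congr (fun x _ => ?_)
      simp only [hvdef]; ring
    have hE : Tendsto (fun z => ∫ x in (z - 1)..(z + 1), Real.cos (k₀ * x) * v x)
        atTop (nhds 0) := by
      rw [Metric.tendsto_atTop]
      intro ε hε
      obtain ⟨M, hM⟩ := Metric.tendsto_atTop.1 hv0 (ε / 3) (by positivity)
      refine ⟨M + 1, fun z hz => ?_⟩
      rw [Real.dist_eq, sub_zero]
      have hb : ∀ x ∈ Set.uIoc (z - 1) (z + 1), ‖Real.cos (k₀ * x) * v x‖ ≤ ε / 3 := by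
        intro x hx
        rw [Set.uIoc_of_le (by linarith)] at hx
        have hxM : M ≤ x := by
          have := hx.1; linarith
        have hvx : |v x| < ε / 3 := by
          have := hM x hxM; rwa [Real.dist_eq, sub_zero] at this
        rw [Real.norm_eq_abs, abs_mul]
        calc |Real.cos (k₀ * x)| * |v x| ≤ 1 * |v x| :=
              mul_le_mul_of_nonneg_right (Real.abs_cos_le_one _) (abs_nonneg _)
          _ = |v x| := one_mul _
          _ ≤ ε / 3 := le_of_lt hvx
      have hle := intervalIntegral.norm_integral_le_of_norm_le_const hb
      rw [Real.norm_eq_abs] at hle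
      have : |z + 1 - (z - 1)| = 2 := by rw [show z + 1 - (z - 1) = 2 by ring]; norm_num
      rw [this] at hle
      linarith
    have hKlim : Tendsto (fun z => ∫ x in (z - 1)..(z + 1), Real.cos (k₀ * x) * u₀ x)
        atTop (nhds 1) := by
      have h := hE.const_add (1 : ℝ)
      rw [add_zero] at h
      refine h.congr (fun z => ?_)
      rw [hsplitK z]
      congr 1
      rw [hk₀] at *
      exact (aux_cossq z).symm
    -- combine
    have hfinal := (hGlim.const_mul (2 * c ^ 2)).add (hKlim.const_mul 2)
    have hval : (2 * c ^ 2) * (-k₀) + 2 * 1 = -2 * c ^ 2 * k₀ + 2 := by ring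
    rw [hval] at hfinal
    exact hfinal.congr (fun z => (aux_key c k₀ α hk₀ hα u₀ hu₀ hodd z).symm)
  · intro h
    have hπ := Real.pi_pos
    rw [div_lt_iff₀ hπ] at h
    rw [hk₀]
    nlinarith
end

section
/- Let u_e be an even function in H²_loc(ℝ) such that for l = 0,1,2, x ↦ (1+x²)·(d^l/dx^l)(u_e(x) − sgn(x)sin(k₀x)) lies in L²(ℝ∖[−1,1]), with k₀ = π/2. Then ∫_ℝ cos(k₀x)·(c²u_e'' − Δ_D u_e + α u_e) dx = 2c²k₀ − 2. -/
open MeasureTheory Set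


-- window bound
lemma aux_window (w : ℝ → ℝ) (hw : Continuous w)
    (hint : Integrable (fun x => ((1+x^2) * w x)^2) (volume.restrict (Set.Ici 1)))
    {z : ℝ} (hz : 1 ≤ z) :
    ∫ y in z..(z+1), |w y| ≤ (1 + ∫ x in Set.Ici (1:ℝ), ((1+x^2)*w x)^2) / (2*(1+z^2)) := by
  have hz2 : (0:ℝ) < 1 + z^2 := by positivity
  have hcont : Continuous fun y : ℝ => (1 + ((1+y^2)*w y)^2) / (2*(1+z^2)) := by
    continuity
  have hmono : ∀ y ∈ Icc z (z+1), |w y| ≤ (1 + ((1+y^2)*w y)^2) / (2*(1+z^2)) := by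
    intro y hy
    have h1 : 1 + z^2 ≤ 1 + y^2 := by nlinarith [hy.1, hy.2, hz]
    have h2 : (1+z^2) * |w y| ≤ (1+y^2) * |w y| :=
      mul_le_mul_of_nonneg_right h1 (abs_nonneg _)
    have h3 : (1+y^2) * |w y| = |(1+y^2) * w y| := by
      rw [abs_mul, abs_of_nonneg (by positivity : (0:ℝ) ≤ 1 + y^2)]
    have h4 : |(1+y^2)*w y| ≤ (1 + ((1+y^2)*w y)^2)/2 := by
      nlinarith [sq_nonneg (|(1+y^2)*w y| - 1), sq_abs ((1+y^2)*w y)]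
    rw [le_div_iff₀ (by positivity)]
    nlinarith
  calc ∫ y in z..(z+1), |w y|
      ≤ ∫ y in z..(z+1), (1 + ((1+y^2)*w y)^2) / (2*(1+z^2)) := by
        apply intervalIntegral.integral_mono_on (by linarith)
          (hw.abs.intervalIntegrable _ _) (hcont.intervalIntegrable _ _) hmono
    _ = (1 + ∫ y in z..(z+1), ((1+y^2)*w y)^2) / (2*(1+z^2)) := by
        rw [intervalIntegral.integral_div, intervalIntegral.integral_add
          intervalIntegrable_const ((by continuity : Continuous fun y : ℝ => ((1+y^2)*w y)^2).intervalIntegrable _ _)]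
        simp
    _ ≤ (1 + ∫ x in Set.Ici (1:ℝ), ((1+x^2)*w x)^2) / (2*(1+z^2)) := by
        have hsub : ∫ y in z..(z+1), ((1+y^2)*w y)^2 ≤ ∫ x in Set.Ici (1:ℝ), ((1+x^2)*w x)^2 := by
          rw [intervalIntegral.integral_of_le (by linarith)]
          apply setIntegral_mono_set hint
          · exact Filter.Eventually.of_forall fun x => sq_nonneg _
          · have : Set.Ioc z (z+1) ⊆ Set.Ici (1:ℝ) := fun x hx => le_trans hz (le_of_lt hx.1)
            exact this.eventuallyLE
        gcongr


lemma aux_point (w : ℝ → ℝ) (hw : ∀ x, DifferentiableAt ℝ w x) (hw' : Continuous (deriv w))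
    (z : ℝ) :
    |w z| ≤ (∫ y in z..(z+1), |w y|) + ∫ y in z..(z+1), |deriv w y| := by
  have hwc : Continuous w := by
    have : Differentiable ℝ w := fun x => hw x
    exact this.continuous
  set K := ∫ y in z..(z+1), |deriv w y| with hK
  have key : ∀ t ∈ Icc z (z+1), |w z| ≤ |w t| + K := by
    intro t ht
    have hftc : ∫ y in z..t, deriv w y = w t - w z :=
      intervalIntegral.integral_deriv_eq_sub (fun y _ => hw y)
        (hw'.intervalIntegrable _ _)
    have h1 : |∫ y in z..t, deriv w y| ≤ ∫ y in z..t, |deriv w y| :=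
      intervalIntegral.abs_integral_le_integral_abs ht.1
    have h2 : ∫ y in z..t, |deriv w y| ≤ K :=
      intervalIntegral.integral_mono_interval le_rfl ht.1 ht.2
        (Filter.Eventually.of_forall fun x => abs_nonneg _)
        ((hw'.abs).intervalIntegrable _ _)
    have h3 : |w z| ≤ |w t| + |∫ y in z..t, deriv w y| := by
      rw [hftc]
      have := abs_sub_abs_le_abs_sub (w z) (w t)
      calc |w z| ≤ |w t| + |w z - w t| := by nlinarith [abs_sub_abs_le_abs_sub (w z) (w t)]
        _ = |w t| + |w t - w z| := by rw [abs_sub_comm]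
      
    linarith
  have hconst : |w z| = ∫ _t in z..(z+1), |w z| := by
    simp
  rw [hconst]
  calc (∫ _t in z..(z+1), |w z|) ≤ ∫ t in z..(z+1), (|w t| + K) := by
        apply intervalIntegral.integral_mono_on (by linarith)
          (intervalIntegrable_const) ((hwc.abs.add continuous_const).intervalIntegrable _ _) key
    _ = (∫ y in z..(z+1), |w y|) + K := by
        rw [intervalIntegral.integral_add (hwc.abs.intervalIntegrable _ _) intervalIntegrable_const]
        simp


lemma aux_ident (c k₀ α : ℝ) (hk₀ : k₀ = Real.pi / 2) (hα : α = c ^ 2 * k₀ ^ 2 - 2)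
    (ue : ℝ → ℝ) (hue : ContDiff ℝ 2 ue) (heven : ∀ x, ue (-x) = ue x) (z : ℝ) :
    ∫ x in (-z)..z, Real.cos (k₀ * x) *
        (c ^ 2 * deriv (deriv ue) x - (ue (x + 1) - 2 * ue x + ue (x - 1)) + α * ue x)
      = 2 * c ^ 2 * (Real.cos (k₀*z) * deriv ue z + k₀ * Real.sin (k₀*z) * ue z)
        - 2 * ∫ y in (z-1)..(z+1), Real.sin (k₀*y) * ue y := by
  have hk₀cos : Real.cos k₀ = 0 := by rw [hk₀]; exact Real.cos_pi_div_two
  have hk₀sin : Real.sin k₀ = 1 := by rw [hk₀]; exact Real.sin_pi_div_two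
  have hd1 : Differentiable ℝ ue := hue.differentiable (by norm_num)
  have hder : ContDiff ℝ 1 (deriv ue) := by
    have := (contDiff_succ_iff_deriv (n := 1)).mp (by exact_mod_cast hue)
    exact this.2.2
  have hd2 : Differentiable ℝ (deriv ue) := hder.differentiable (by norm_num)
  have hcd2 : Continuous (deriv (deriv ue)) := hder.continuous_deriv le_rfl
  have hcd1 : Continuous (deriv ue) := hd2.continuous
  have hcue : Continuous ue := hd1.continuous
  set S : ℝ → ℝ := fun y => Real.sin (k₀*y) * ue y with hS
  have hScont : Continuous S := by fun_prop
  -- trig rewrites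
  have e1 : ∀ x : ℝ, Real.cos (k₀*x) * ue (x+1) = S (x+1) := by
    intro x
    have : Real.sin (k₀*(x+1)) = Real.cos (k₀*x) := by
      have : k₀*(x+1) = k₀*x + k₀ := by ring
      rw [this, Real.sin_add, hk₀cos, hk₀sin]; ring
    simp [hS, this]
  have e2 : ∀ x : ℝ, Real.cos (k₀*x) * ue (x-1) = - S (x-1) := by
    intro x
    have : Real.sin (k₀*(x-1)) = - Real.cos (k₀*x) := by
      have : k₀*(x-1) = k₀*x - k₀ := by ring
      rw [this, Real.sin_sub, hk₀cos, hk₀sin]; ring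
    simp only [hS]
    rw [this]; ring
  -- derivative facts
  have hcosD : ∀ x : ℝ, HasDerivAt (fun y => Real.cos (k₀*y)) (-(k₀ * Real.sin (k₀*x))) x := by
    intro x
    have h1 : HasDerivAt (fun y : ℝ => k₀*y) k₀ x := by
      simpa using (hasDerivAt_id x).const_mul k₀
    have := (Real.hasDerivAt_cos (k₀*x)).comp x h1
    simpa [mul_comm, Function.comp_def] using this
  have hsinD : ∀ x : ℝ, HasDerivAt (fun y => Real.sin (k₀*y)) (k₀ * Real.cos (k₀*x)) x := by
    intro x
    have h1 : HasDerivAt (fun y : ℝ => k₀*y) k₀ x := by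
      simpa using (hasDerivAt_id x).const_mul k₀
    have := (Real.hasDerivAt_sin (k₀*x)).comp x h1
    simpa [mul_comm, Function.comp_def] using this
  -- split the integral
  have hsplit : ∀ x : ℝ, Real.cos (k₀ * x) *
        (c ^ 2 * deriv (deriv ue) x - (ue (x + 1) - 2 * ue x + ue (x - 1)) + α * ue x)
      = c^2 * (Real.cos (k₀*x) * deriv (deriv ue) x) - S (x+1) + S (x-1)
        + (2+α) * (Real.cos (k₀*x) * ue x) := by
    intro x
    have h2 : S (x-1) = - (Real.cos (k₀*x) * ue (x-1)) := by rw [e2 x]; ring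
    rw [← e1 x, h2]
    ring
  have hintS1 : IntervalIntegrable (fun x => S (x+1)) volume (-z) z :=
    (hScont.comp (by fun_prop)).intervalIntegrable _ _
  have hintS2 : IntervalIntegrable (fun x => S (x-1)) volume (-z) z :=
    (hScont.comp (by fun_prop)).intervalIntegrable _ _
  have hintCD : IntervalIntegrable (fun x => c^2 * (Real.cos (k₀*x) * deriv (deriv ue) x)) volume (-z) z :=
    (by fun_prop : Continuous fun x => c^2 * (Real.cos (k₀*x) * deriv (deriv ue) x)).intervalIntegrable _ _
  have hintCU : IntervalIntegrable (fun x => (2+α) * (Real.cos (k₀*x) * ue x)) volume (-z) z :=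
    (by fun_prop : Continuous fun x => (2+α) * (Real.cos (k₀*x) * ue x)).intervalIntegrable _ _
  have step1 : ∫ x in (-z)..z, Real.cos (k₀ * x) *
        (c ^ 2 * deriv (deriv ue) x - (ue (x + 1) - 2 * ue x + ue (x - 1)) + α * ue x)
      = c^2 * (∫ x in (-z)..z, Real.cos (k₀*x) * deriv (deriv ue) x)
        - (∫ x in (-z)..z, S (x+1)) + (∫ x in (-z)..z, S (x-1))
        + (2+α) * ∫ x in (-z)..z, Real.cos (k₀*x) * ue x := by
    rw [intervalIntegral.integral_congr (g := fun x =>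
        c^2 * (Real.cos (k₀*x) * deriv (deriv ue) x) - S (x+1) + S (x-1)
        + (2+α) * (Real.cos (k₀*x) * ue x)) (fun x _ => hsplit x)]
    rw [intervalIntegral.integral_add (((hintCD.sub hintS1).add hintS2)) hintCU,
      intervalIntegral.integral_add (hintCD.sub hintS1) hintS2,
      intervalIntegral.integral_sub hintCD hintS1,
      intervalIntegral.integral_const_mul, intervalIntegral.integral_const_mul]
  -- shifts
  have shift1 : (∫ x in (-z)..z, S (x+1)) = ∫ y in (1-z)..(z+1), S y := by
    rw [intervalIntegral.integral_comp_add_right S 1]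
    norm_num [sub_eq_add_neg, add_comm]
  have shift2 : (∫ x in (-z)..z, S (x-1)) = ∫ y in (-z-1)..(z-1), S y := by
    rw [intervalIntegral.integral_comp_sub_right S 1]
  -- oddness
  have hodd : ∀ y, S (-y) = - S y := by
    intro y
    simp only [hS]
    rw [mul_neg, Real.sin_neg, heven]
    ring
  have hneg : ∀ a b : ℝ, (∫ y in (-b)..(-a), S y) = - ∫ y in a..b, S y := by
    intro a b
    rw [← intervalIntegral.integral_comp_neg S]
    rw [intervalIntegral.integral_congr (g := fun y => - S y) (fun y _ => hodd y)]
    exact intervalIntegral.integral_neg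
  have hzero : (∫ y in (1-z)..(z-1), S y) = 0 := by
    have h := hneg (1-z) (z-1)
    have hb : -(z-1) = 1-z ∧ -(1-z) = z-1 := by constructor <;> ring
    rw [hb.1, hb.2] at h
    linarith
  have hadj : (∫ y in (1-z)..(z+1), S y) = (∫ y in (1-z)..(z-1), S y) + ∫ y in (z-1)..(z+1), S y := by
    rw [intervalIntegral.integral_add_adjacent_intervals (hScont.intervalIntegrable _ _)
      (hScont.intervalIntegrable _ _)]
  have shift2' : (∫ x in (-z)..z, S (x-1)) = - ∫ y in (1-z)..(z+1), S y := by
    rw [shift2]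
    have h := hneg (1-z) (z+1)
    have hb1 : -(z+1) = -z-1 := by ring
    have hb2 : -(1-z) = z-1 := by ring
    rw [hb1, hb2] at h
    exact h
  -- evenness
  have even1 : ue (-z) = ue z := heven z
  have even2 : deriv ue (-z) = - deriv ue z := by
    have h := deriv_comp_neg (f := ue) (x := z)
    have h2 : (fun x => ue (-x)) = ue := funext heven
    rw [h2] at h
    linarith
  have ecos : Real.cos (k₀*(-z)) = Real.cos (k₀*z) := by rw [mul_neg, Real.cos_neg]
  have esin : Real.sin (k₀*(-z)) = -Real.sin (k₀*z) := by rw [mul_neg, Real.sin_neg]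
  -- integration by parts
  have ibp1 : ∫ x in (-z)..z, Real.cos (k₀*x) * deriv (deriv ue) x
      = Real.cos (k₀*z) * deriv ue z - Real.cos (k₀*(-z)) * deriv ue (-z)
        - ∫ x in (-z)..z, (-(k₀ * Real.sin (k₀*x))) * deriv ue x :=
    intervalIntegral.integral_mul_deriv_eq_deriv_mul (fun x _ => hcosD x)
      (fun x _ => (hd2 x).hasDerivAt)
      ((by fun_prop : Continuous fun x => -(k₀ * Real.sin (k₀*x))).intervalIntegrable _ _)
      (hcd2.intervalIntegrable _ _)
  have ibp2 : ∫ x in (-z)..z, Real.sin (k₀*x) * deriv ue x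
      = Real.sin (k₀*z) * ue z - Real.sin (k₀*(-z)) * ue (-z)
        - ∫ x in (-z)..z, (k₀ * Real.cos (k₀*x)) * ue x :=
    intervalIntegral.integral_mul_deriv_eq_deriv_mul (fun x _ => hsinD x)
      (fun x _ => (hd1 x).hasDerivAt)
      ((by fun_prop : Continuous fun x => k₀ * Real.cos (k₀*x)).intervalIntegrable _ _)
      (hcd1.intervalIntegrable _ _)
  have pull1 : ∫ x in (-z)..z, (-(k₀ * Real.sin (k₀*x))) * deriv ue x
      = (-k₀) * ∫ x in (-z)..z, Real.sin (k₀*x) * deriv ue x := by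
    rw [← intervalIntegral.integral_const_mul]
    apply intervalIntegral.integral_congr
    intro x _
    ring
  have pull2 : ∫ x in (-z)..z, (k₀ * Real.cos (k₀*x)) * ue x
      = k₀ * ∫ x in (-z)..z, Real.cos (k₀*x) * ue x := by
    rw [← intervalIntegral.integral_const_mul]
    apply intervalIntegral.integral_congr
    intro x _
    ring
  rw [step1, shift2', shift1, hadj, hzero, ibp1, pull1, ibp2, pull2, even1, even2, ecos, esin, hα]
  ring

lemma aux_sinsq (k₀ : ℝ) (hk₀ : k₀ = Real.pi / 2) (z : ℝ) :
    ∫ y in (z-1)..(z+1), Real.sin (k₀*y) * Real.sin (k₀*y) = 1 := by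
  have hpi : Real.pi ≠ 0 := Real.pi_ne_zero
  have hda : ∀ t : ℝ, HasDerivAt (fun y => y/2 - Real.sin (Real.pi*y)/(2*Real.pi))
      (Real.sin (k₀*t) * Real.sin (k₀*t)) t := by
    intro t
    have h1 : HasDerivAt (fun y : ℝ => Real.pi*y) Real.pi t := by
      simpa using (hasDerivAt_id t).const_mul Real.pi
    have h2 : HasDerivAt (fun y : ℝ => Real.sin (Real.pi*y)) (Real.cos (Real.pi*t) * Real.pi) t :=
      (Real.hasDerivAt_sin (Real.pi*t)).comp t h1
    have h3 : HasDerivAt (fun y => y/2 - Real.sin (Real.pi*y)/(2*Real.pi))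
        (1/2 - Real.cos (Real.pi*t)*Real.pi/(2*Real.pi)) t :=
      ((hasDerivAt_id t).div_const 2).sub ((h2).div_const (2*Real.pi))
    convert h3 using 1
    have h4 : 2*(k₀*t) = Real.pi*t := by rw [hk₀]; ring
    have hc := Real.cos_two_mul (k₀*t)
    rw [h4] at hc
    have hs := Real.sin_sq_add_cos_sq (k₀*t)
    have h5 : Real.cos (Real.pi*t)*Real.pi/(2*Real.pi) = Real.cos (Real.pi*t)/2 := by
      field_simp
    rw [h5, hc]
    nlinarith
  rw [intervalIntegral.integral_eq_sub_of_hasDerivAt (fun t _ => hda t)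
    ((by fun_prop : Continuous fun t => Real.sin (k₀*t) * Real.sin (k₀*t)).intervalIntegrable _ _)]
  have e1 : Real.pi * (z+1) = Real.pi*z + Real.pi := by ring
  have e2 : Real.pi * (z-1) = Real.pi*z - Real.pi := by ring
  rw [e1, e2, Real.sin_add_pi, Real.sin_sub_pi]
  field_simp
  ring

theorem stmt_10 (c k₀ α : ℝ) (hk₀ : k₀ = Real.pi / 2) (hα : α = c ^ 2 * k₀ ^ 2 - 2)
    (ue : ℝ → ℝ) (hue : ContDiff ℝ 2 ue) (heven : ∀ x, ue (-x) = ue x)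
    (hdecay : ∀ l : ℕ, l ≤ 2 →
      MemLp (fun x => (1 + x ^ 2) *
          iteratedDeriv l (fun y => ue y - Real.sign y * Real.sin (k₀ * y)) x) 2
        (volume.restrict {x : ℝ | 1 ≤ |x|})) :
    Filter.Tendsto
      (fun z : ℝ => ∫ x in (-z)..z, Real.cos (k₀ * x) *
        (c ^ 2 * deriv (deriv ue) x - (ue (x + 1) - 2 * ue x + ue (x - 1)) + α * ue x))
      Filter.atTop (nhds (2 * c ^ 2 * k₀ - 2)) := by
  have hk₀pos : 0 < k₀ := by rw [hk₀]; positivity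
  set v : ℝ → ℝ := fun y => ue y - Real.sin (k₀*y) with hvdef
  have hsinCD : ContDiff ℝ 2 (fun y : ℝ => Real.sin (k₀*y)) :=
    (Real.contDiff_sin.comp (contDiff_const.mul contDiff_id)).of_le le_top
  have hv : ContDiff ℝ 2 v := hue.sub hsinCD
  have hvd1 : Differentiable ℝ v := hv.differentiable (by norm_num)
  have hvder : ContDiff ℝ 1 (deriv v) :=
    ((contDiff_succ_iff_deriv (n := 1)).mp (by exact_mod_cast hv)).2.2
  have hvd2 : Differentiable ℝ (deriv v) := hvder.differentiable (by norm_num)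
  have hvc1 : Continuous (deriv v) := hvd2.continuous
  have hvc2 : Continuous (deriv (deriv v)) := hvder.continuous_deriv le_rfl
  have hi1 : iteratedDeriv 1 v = deriv v := iteratedDeriv_one
  have hi2 : iteratedDeriv 2 v = deriv (deriv v) := by
    rw [iteratedDeriv_succ, iteratedDeriv_one]
  have hd1ue : Differentiable ℝ ue := hue.differentiable (by norm_num)
  have hsinD : ∀ x : ℝ, HasDerivAt (fun y => Real.sin (k₀*y)) (k₀ * Real.cos (k₀*x)) x := by
    intro x
    have h1 : HasDerivAt (fun y : ℝ => k₀*y) k₀ x := by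
      simpa using (hasDerivAt_id x).const_mul k₀
    simpa [mul_comm, Function.comp_def] using (Real.hasDerivAt_sin (k₀*x)).comp x h1
  -- transfer of the decay hypothesis
  have hφv : ∀ l : ℕ, ∀ x : ℝ, 0 < x →
      iteratedDeriv l (fun y => ue y - Real.sign y * Real.sin (k₀ * y)) x = iteratedDeriv l v x := by
    intro l x hx
    apply Filter.EventuallyEq.iteratedDeriv_eq
    filter_upwards [isOpen_Ioi.mem_nhds (show x ∈ Set.Ioi (0:ℝ) from hx)] with y hy
    simp [hvdef, Real.sign_of_pos hy]
  have hMem : ∀ l : ℕ, l ≤ 2 → Integrable (fun x => ((1+x^2) * iteratedDeriv l v x)^2)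
      (volume.restrict (Set.Ici (1:ℝ))) := by
    intro l hl
    have hsub : Set.Ici (1:ℝ) ⊆ {x : ℝ | 1 ≤ |x|} := fun x hx => le_trans hx (le_abs_self x)
    have h2 : MemLp (fun x => (1 + x ^ 2) *
        iteratedDeriv l (fun y => ue y - Real.sign y * Real.sin (k₀ * y)) x) 2
        (volume.restrict (Set.Ici (1:ℝ))) :=
      (hdecay l hl).mono_measure (Measure.restrict_mono hsub le_rfl)
    have h3 : MemLp (fun x => (1 + x ^ 2) * iteratedDeriv l v x) 2
        (volume.restrict (Set.Ici (1:ℝ))) := by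
      apply h2.ae_eq
      filter_upwards [ae_restrict_mem measurableSet_Ici] with x hx
      rw [hφv l x (lt_of_lt_of_le one_pos hx)]
    have hcont : Continuous (fun x => (1 + x ^ 2) * iteratedDeriv l v x) := by
      have := hv.continuous_iteratedDeriv l (by exact_mod_cast hl)
      fun_prop
    exact (memLp_two_iff_integrable_sq hcont.aestronglyMeasurable).mp h3
  set C : ℕ → ℝ := fun l => 1 + ∫ x in Set.Ici (1:ℝ), ((1+x^2) * iteratedDeriv l v x)^2 with hCdef
  have hCnn : ∀ l : ℕ, 0 ≤ C l := by
    intro l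
    have : 0 ≤ ∫ x in Set.Ici (1:ℝ), ((1+x^2) * iteratedDeriv l v x)^2 :=
      integral_nonneg fun x => sq_nonneg _
    simp only [hCdef]
    linarith
  have hwin : ∀ l : ℕ, l ≤ 2 → ∀ z : ℝ, 1 ≤ z →
      ∫ y in z..(z+1), |iteratedDeriv l v y| ≤ C l / (2*(1+z^2)) := by
    intro l hl z hz
    exact aux_window (iteratedDeriv l v) (hv.continuous_iteratedDeriv l (by exact_mod_cast hl))
      (hMem l hl) hz
  have hpt0 : ∀ z : ℝ, |v z| ≤ (∫ y in z..(z+1), |iteratedDeriv 0 v y|)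
      + ∫ y in z..(z+1), |iteratedDeriv 1 v y| := by
    intro z
    simpa [iteratedDeriv_zero, hi1] using aux_point v (fun x => hvd1 x) hvc1 z
  have hpt1 : ∀ z : ℝ, |deriv v z| ≤ (∫ y in z..(z+1), |iteratedDeriv 1 v y|)
      + ∫ y in z..(z+1), |iteratedDeriv 2 v y| := by
    intro z
    simpa [hi1, hi2] using aux_point (deriv v) (fun x => hvd2 x) hvc2 z
  set K : ℝ := c^2*(C 1 + C 2 + k₀*(C 0 + C 1)) + 2*(C 0) with hKdef
  -- the main pointwise estimate
  have hB : ∀ z : ℝ, 2 ≤ z →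
      |(2 * c ^ 2 * (Real.cos (k₀*z) * deriv ue z + k₀ * Real.sin (k₀*z) * ue z)
        - 2 * ∫ y in (z-1)..(z+1), Real.sin (k₀*y) * ue y) - (2 * c ^ 2 * k₀ - 2)|
      ≤ K / (1 + (z-1)^2) := by
    intro z hz2
    have hz1 : (1:ℝ) ≤ z := by linarith
    have hz1' : (1:ℝ) ≤ z - 1 := by linarith
    have hdpos : (0:ℝ) < 1 + (z-1)^2 := by positivity
    set d : ℝ := 1 + (z-1)^2 with hddef
    have hzd : 1 + (z-1)^2 ≤ 1 + z^2 := by nlinarith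
    -- decomposition
    have hveq : ue z = v z + Real.sin (k₀*z) := by simp [hvdef]
    have hdeq : deriv ue z = deriv v z + k₀ * Real.cos (k₀*z) := by
      have h1 : deriv v z = deriv ue z - k₀ * Real.cos (k₀*z) := by
        rw [hvdef]
        rw [deriv_fun_sub (hd1ue z) (hsinD z).differentiableAt, (hsinD z).deriv]
      linarith
    have hIeq : (∫ y in (z-1)..(z+1), Real.sin (k₀*y) * ue y)
        = (∫ y in (z-1)..(z+1), Real.sin (k₀*y) * v y) + 1 := by
      rw [intervalIntegral.integral_congr (g := fun y =>
          Real.sin (k₀*y) * v y + Real.sin (k₀*y) * Real.sin (k₀*y))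
          (fun y _ => by simp [hvdef]; ring),
        intervalIntegral.integral_add
          ((by fun_prop : Continuous fun y => Real.sin (k₀*y) * v y).intervalIntegrable _ _)
          ((by fun_prop : Continuous fun y => Real.sin (k₀*y) * Real.sin (k₀*y)).intervalIntegrable _ _),
        aux_sinsq k₀ hk₀ z]
    have hpy := Real.sin_sq_add_cos_sq (k₀*z)
    have hdecomp : (2 * c ^ 2 * (Real.cos (k₀*z) * deriv ue z + k₀ * Real.sin (k₀*z) * ue z)
        - 2 * ∫ y in (z-1)..(z+1), Real.sin (k₀*y) * ue y) - (2 * c ^ 2 * k₀ - 2)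
        = 2 * c ^ 2 * (Real.cos (k₀*z) * deriv v z + k₀ * Real.sin (k₀*z) * v z)
          - 2 * ∫ y in (z-1)..(z+1), Real.sin (k₀*y) * v y := by
      rw [hveq, hdeq, hIeq]
      linear_combination (2*c^2*k₀) * hpy
    rw [hdecomp]
    -- window bounds
    have W0 : ∫ y in z..(z+1), |iteratedDeriv 0 v y| ≤ C 0 / (2*d) := by
      refine (hwin 0 (by norm_num) z hz1).trans ?_
      gcongr
    have W1 : ∫ y in z..(z+1), |iteratedDeriv 1 v y| ≤ C 1 / (2*d) := by
      refine (hwin 1 (by norm_num) z hz1).trans ?_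
      gcongr
    have W2 : ∫ y in z..(z+1), |iteratedDeriv 2 v y| ≤ C 2 / (2*d) := by
      refine (hwin 2 (by norm_num) z hz1).trans ?_
      gcongr
    have W0' : ∫ y in (z-1)..z, |iteratedDeriv 0 v y| ≤ C 0 / (2*d) := by
      have h := hwin 0 (by norm_num) (z-1) hz1'
      have he : z - 1 + 1 = z := by ring
      rw [he] at h
      exact h.trans (by rw [hddef])
    -- integral error bound
    have hIv : |∫ y in (z-1)..(z+1), Real.sin (k₀*y) * v y|
        ≤ (∫ y in (z-1)..z, |iteratedDeriv 0 v y|) + ∫ y in z..(z+1), |iteratedDeriv 0 v y| := by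
      have hsplit2 : (∫ y in (z-1)..(z+1), |v y|)
          = (∫ y in (z-1)..z, |v y|) + ∫ y in z..(z+1), |v y| := by
        rw [intervalIntegral.integral_add_adjacent_intervals
          ((hvd1.continuous.abs).intervalIntegrable _ _)
          ((hvd1.continuous.abs).intervalIntegrable _ _)]
      calc |∫ y in (z-1)..(z+1), Real.sin (k₀*y) * v y|
          ≤ ∫ y in (z-1)..(z+1), |Real.sin (k₀*y) * v y| :=
            intervalIntegral.abs_integral_le_integral_abs (by linarith)
        _ ≤ ∫ y in (z-1)..(z+1), |v y| := by
            apply intervalIntegral.integral_mono_on (by linarith)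
              ((by fun_prop : Continuous fun y => |Real.sin (k₀*y) * v y|).intervalIntegrable _ _)
              ((hvd1.continuous.abs).intervalIntegrable _ _)
            intro y _
            rw [abs_mul]
            exact mul_le_of_le_one_left (abs_nonneg _) (Real.abs_sin_le_one _)
        _ = (∫ y in (z-1)..z, |iteratedDeriv 0 v y|) + ∫ y in z..(z+1), |iteratedDeriv 0 v y| := by
            rw [hsplit2]
            simp [iteratedDeriv_zero]
    -- pointwise error bounds
    have A1 : |deriv v z| ≤ (C 1 + C 2) / (2*d) := by
      have := (hpt1 z).trans (add_le_add W1 W2)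
      rw [← add_div] at this
      exact this
    have A2 : |v z| ≤ (C 0 + C 1) / (2*d) := by
      have := (hpt0 z).trans (add_le_add W0 W1)
      rw [← add_div] at this
      exact this
    have A3 : |∫ y in (z-1)..(z+1), Real.sin (k₀*y) * v y| ≤ C 0 / d := by
      refine (hIv.trans (add_le_add W0' W0)).trans ?_
      rw [← add_div]
      apply le_of_eq
      rw [eq_div_iff (ne_of_gt hdpos)]
      field_simp
      ring
    -- assemble
    have hX : |Real.cos (k₀*z) * deriv v z + k₀ * Real.sin (k₀*z) * v z|
        ≤ |deriv v z| + k₀ * |v z| := by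
      refine (abs_add_le _ _).trans (add_le_add ?_ ?_)
      · rw [abs_mul]
        exact mul_le_of_le_one_left (abs_nonneg _) (Real.abs_cos_le_one _)
      · rw [mul_assoc, abs_mul, abs_of_pos hk₀pos, abs_mul]
        gcongr
        exact mul_le_of_le_one_left (abs_nonneg _) (Real.abs_sin_le_one _)
    calc |2 * c ^ 2 * (Real.cos (k₀*z) * deriv v z + k₀ * Real.sin (k₀*z) * v z)
          - 2 * ∫ y in (z-1)..(z+1), Real.sin (k₀*y) * v y|
        ≤ |2 * c ^ 2 * (Real.cos (k₀*z) * deriv v z + k₀ * Real.sin (k₀*z) * v z)|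
          + |2 * ∫ y in (z-1)..(z+1), Real.sin (k₀*y) * v y| := abs_sub _ _
      _ = 2 * c ^ 2 * |Real.cos (k₀*z) * deriv v z + k₀ * Real.sin (k₀*z) * v z|
          + 2 * |∫ y in (z-1)..(z+1), Real.sin (k₀*y) * v y| := by
          rw [abs_mul, abs_mul, abs_mul, abs_of_nonneg (show (0:ℝ) ≤ c^2 by positivity),
            abs_of_nonneg (show (0:ℝ) ≤ 2 by norm_num)]
      _ ≤ 2 * c ^ 2 * ((C 1 + C 2) / (2*d) + k₀ * ((C 0 + C 1) / (2*d))) + 2 * (C 0 / d) := by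
          have hstep1 : |Real.cos (k₀*z) * deriv v z + k₀ * Real.sin (k₀*z) * v z|
              ≤ (C 1 + C 2) / (2*d) + k₀ * ((C 0 + C 1) / (2*d)) :=
            hX.trans (add_le_add A1 (mul_le_mul_of_nonneg_left A2 hk₀pos.le))
          have h1 := mul_le_mul_of_nonneg_left hstep1 (show (0:ℝ) ≤ 2*c^2 by positivity)
          have h2 := mul_le_mul_of_nonneg_left A3 (show (0:ℝ) ≤ 2 by norm_num)
          calc 2 * c ^ 2 * |Real.cos (k₀*z) * deriv v z + k₀ * Real.sin (k₀*z) * v z|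
                + 2 * |∫ y in (z-1)..(z+1), Real.sin (k₀*y) * v y|
              = 2*c^2 * |Real.cos (k₀*z) * deriv v z + k₀ * Real.sin (k₀*z) * v z|
                + 2 * |∫ y in (z-1)..(z+1), Real.sin (k₀*y) * v y| := by ring
            _ ≤ 2*c^2 * ((C 1 + C 2) / (2*d) + k₀ * ((C 0 + C 1) / (2*d))) + 2 * (C 0 / d) :=
                add_le_add h1 h2
            _ = 2 * c ^ 2 * ((C 1 + C 2) / (2*d) + k₀ * ((C 0 + C 1) / (2*d))) + 2 * (C 0 / d) := by ring
      _ = K / d := by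
          rw [hKdef]
          field_simp
  -- limit of the bounding function
  have hKlim : Filter.Tendsto (fun z : ℝ => K / (1 + (z-1)^2)) Filter.atTop (nhds 0) := by
    apply Filter.Tendsto.div_atTop (tendsto_const_nhds)
    have h1 : Filter.Tendsto (fun z : ℝ => z - 1) Filter.atTop Filter.atTop :=
      Filter.tendsto_atTop_add_const_right _ (-1) Filter.tendsto_id
    have h2 : Filter.Tendsto (fun z : ℝ => (z-1)^2) Filter.atTop Filter.atTop :=
      (Filter.tendsto_pow_atTop two_ne_zero).comp h1
    exact Filter.tendsto_atTop_add_const_left _ 1 h2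
  -- conclude
  have hident : (fun z : ℝ => ∫ x in (-z)..z, Real.cos (k₀ * x) *
        (c ^ 2 * deriv (deriv ue) x - (ue (x + 1) - 2 * ue x + ue (x - 1)) + α * ue x))
      = fun z : ℝ => 2 * c ^ 2 * (Real.cos (k₀*z) * deriv ue z + k₀ * Real.sin (k₀*z) * ue z)
        - 2 * ∫ y in (z-1)..(z+1), Real.sin (k₀*y) * ue y :=
    funext fun z => aux_ident c k₀ α hk₀ hα ue hue heven z
  rw [hident]
  have hlow : Filter.Tendsto (fun z : ℝ => (2 * c ^ 2 * k₀ - 2) - K / (1 + (z-1)^2))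
      Filter.atTop (nhds (2 * c ^ 2 * k₀ - 2)) := by
    simpa using tendsto_const_nhds.sub hKlim
  have hhigh : Filter.Tendsto (fun z : ℝ => (2 * c ^ 2 * k₀ - 2) + K / (1 + (z-1)^2))
      Filter.atTop (nhds (2 * c ^ 2 * k₀ - 2)) := by
    simpa using tendsto_const_nhds.add hKlim
  apply tendsto_of_tendsto_of_tendsto_of_le_of_le' hlow hhigh
  · filter_upwards [Filter.eventually_ge_atTop (2:ℝ)] with z hz
    have := (abs_le.mp (hB z hz)).1
    linarith
  · filter_upwards [Filter.eventually_ge_atTop (2:ℝ)] with z hz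
    have := (abs_le.mp (hB z hz)).2
    linarith
end
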